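/- Every locally precompact Hausdorff topological group embeds as a dense topological subgroup of a locally compact Hausdorff group (Weil's theorem). -/

import Mathlib

open scoped Pointwise Uniformity
open Filter Set Topology UniformSpace Function

namespace WeilAux

variable {G : Type*} [Group G] [TopologicalSpace G] [IsTopologicalGroup G]

/-- The two-sided entourage associated to a neighborhood of `1`. -/
def ent (V : Set G) : Set (G × G) := {p | p.1⁻¹ * p.2 ∈ V ∧ p.2 * p.1⁻¹ ∈ V}

variable (G) in
/-- The two-sided uniformity filter. -/
def biFilter : Filter (G × G) := ⨅ V ∈ 𝓝 (1 : G), 𝓟 (ent V)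

omit [IsTopologicalGroup G] in
lemma biFilter_hasBasis :
    (biFilter G).HasBasis (fun V : Set G => V ∈ 𝓝 (1 : G)) ent := by
  refine Filter.hasBasis_biInf_principal ?_ ⟨univ, univ_mem⟩
  rintro V hV W hW
  exact ⟨V ∩ W, inter_mem hV hW,
    fun p hp => ⟨hp.1.1, hp.2.1⟩, fun p hp => ⟨hp.1.2, hp.2.2⟩⟩

/-- A symmetric neighborhood `W` of `1` with `W * W * W ⊆ V` and `W ⊆ V`. -/
lemma exists_triple_nhds_one (V : Set G) (hV : V ∈ 𝓝 (1 : G)) :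
    ∃ W ∈ 𝓝 (1 : G), (∀ x ∈ W, x⁻¹ ∈ W) ∧ (∀ x ∈ W, ∀ y ∈ W, ∀ z ∈ W, x * y * z ∈ V) ∧
      ∀ x ∈ W, x ∈ V := by
  obtain ⟨V₁, hV₁, h₁⟩ := exists_nhds_one_split hV
  obtain ⟨V₂, hV₂, h₂⟩ := exists_nhds_one_split hV₁
  refine ⟨V₂ ∩ V₂⁻¹, Filter.inter_mem hV₂ (inv_mem_nhds_one G hV₂), ?_, ?_, ?_⟩
  · rintro x ⟨hx, hx'⟩
    exact ⟨hx', by simpa using hx⟩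
  · rintro x ⟨hx, -⟩ y ⟨hy, -⟩ z ⟨hz, -⟩
    have h1 : (1 : G) ∈ V₂ := mem_of_mem_nhds hV₂
    have := h₁ _ (h₂ _ hx _ hy) _ (h₂ _ hz _ h1)
    simpa using this
  · rintro x ⟨hx, -⟩
    have h1 : (1 : G) ∈ V₂ := mem_of_mem_nhds hV₂
    have := h₁ _ (h₂ _ hx _ h1) _ (h₂ _ h1 _ h1)
    simpa using this

variable (G) in
/-- The two-sided (Raikov) uniform structure on a topological group. -/
noncomputable def biU : UniformSpace G where
  toTopologicalSpace := ‹TopologicalSpace G›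
  uniformity := biFilter G
  symm := by
    rw [biFilter_hasBasis.tendsto_iff biFilter_hasBasis]
    intro V hV
    refine ⟨V⁻¹, inv_mem_nhds_one G hV, fun p hp => ⟨?_, ?_⟩⟩
    · have := hp.1
      rw [Set.mem_inv] at this
      simpa [mul_inv_rev] using this
    · have := hp.2
      rw [Set.mem_inv] at this
      simpa [mul_inv_rev] using this
  comp := by
    refine le_iInf₂ fun V hV => ?_
    obtain ⟨W, hW, h⟩ := exists_nhds_one_split hV
    refine le_principal_iff.2 (mem_of_superset
      (mem_lift' (biFilter_hasBasis.mem_of_mem hW)) ?_)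
    rintro ⟨x, z⟩ ⟨y, ⟨h1, h2⟩, h3, h4⟩
    constructor
    · have := h _ h1 _ h3
      have e : x⁻¹ * y * (y⁻¹ * z) = x⁻¹ * z := by group
      rwa [e] at this
    · have := h _ h4 _ h2
      have e : z * y⁻¹ * (y * x⁻¹) = z * x⁻¹ := by group
      rwa [e] at this
  nhds_eq_comap_uniformity x := by
    apply le_antisymm
    · refine ((biFilter_hasBasis.comap (Prod.mk x)).ge_iff).2 fun V hV => ?_
      have hpre : Prod.mk x ⁻¹' ent V =
          ((fun y : G => x⁻¹ * y) ⁻¹' V) ∩ ((fun y : G => y * x⁻¹) ⁻¹' V) := rfl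
      rw [hpre]
      have c1 : ContinuousAt (fun y : G => x⁻¹ * y) x :=
        (continuous_const.mul continuous_id).continuousAt
      have c2 : ContinuousAt (fun y : G => y * x⁻¹) x :=
        (continuous_id.mul continuous_const).continuousAt
      exact inter_mem (c1.preimage_mem_nhds (by simpa using hV))
        (c2.preimage_mem_nhds (by simpa using hV))
    · intro S hS
      rw [(biFilter_hasBasis.comap (Prod.mk x)).mem_iff]
      have cx : ContinuousAt (fun g : G => x * g) 1 :=
        (continuous_const.mul continuous_id).continuousAt
      refine ⟨(fun g : G => x * g) ⁻¹' S, cx.preimage_mem_nhds (by simpa using hS), ?_⟩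
      intro y hy
      have : x * (x⁻¹ * y) ∈ S := hy.1
      simpa using this

section

attribute [local instance] biU

lemma uniformity_hasBasis :
    (𝓤 G).HasBasis (fun V : Set G => V ∈ 𝓝 (1 : G)) ent := biFilter_hasBasis

lemma uniformContinuous_inv' : UniformContinuous fun x : G => x⁻¹ := by
  rw [UniformContinuous, uniformity_hasBasis.tendsto_iff uniformity_hasBasis]
  intro V hV
  refine ⟨V⁻¹, inv_mem_nhds_one G hV, fun p hp => ⟨?_, ?_⟩⟩
  · have := hp.2
    rw [Set.mem_inv] at this
    simpa [mul_inv_rev] using this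
  · have := hp.1
    rw [Set.mem_inv] at this
    simpa [mul_inv_rev] using this

lemma cauchy_iff_ent {F : Filter G} :
    Cauchy F ↔ F.NeBot ∧ ∀ V, V ∈ 𝓝 (1 : G) →
      ∃ A ∈ F, ∀ x ∈ A, ∀ y ∈ A, (x, y) ∈ ent V :=
  uniformity_hasBasis.cauchy_iff

/-- Key lemma (Raikov): the product of two Cauchy filters for the two-sided uniformity
is Cauchy. -/
theorem cauchy_mul {F H : Filter G} (hF : Cauchy F) (hH : Cauchy H) :
    Cauchy (Filter.map (fun p : G × G => p.1 * p.2) (F ×ˢ H)) := by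
  rw [cauchy_iff_ent] at hF hH ⊢
  obtain ⟨hFne, hFs⟩ := hF
  obtain ⟨hHne, hHs⟩ := hH
  refine ⟨(hFne.prod hHne).map _, fun V hV => ?_⟩
  obtain ⟨V₁, hV₁, h₁⟩ := exists_nhds_one_split hV
  obtain ⟨V₂, hV₂, hV₂inv, hV₂triple, hV₂sub⟩ := exists_triple_nhds_one V₁ hV₁
  obtain ⟨A₀, hA₀F, hA₀⟩ := hFs V₂ hV₂
  obtain ⟨B₀, hB₀F, hB₀⟩ := hHs V₂ hV₂
  obtain ⟨a₀, ha₀⟩ : A₀.Nonempty := hFne.nonempty_of_mem hA₀F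
  obtain ⟨b₀, hb₀⟩ : B₀.Nonempty := hHne.nonempty_of_mem hB₀F
  have hcb : ContinuousAt (fun g : G => b₀⁻¹ * g * b₀) 1 :=
    ((continuous_const.mul continuous_id).mul continuous_const).continuousAt
  have hca : ContinuousAt (fun g : G => a₀ * g * a₀⁻¹) 1 :=
    ((continuous_const.mul continuous_id).mul continuous_const).continuousAt
  have hX : (fun g : G => b₀⁻¹ * g * b₀) ⁻¹' V₂ ∈ 𝓝 (1 : G) :=
    hcb.preimage_mem_nhds (by simpa using hV₂)
  have hY : (fun g : G => a₀ * g * a₀⁻¹) ⁻¹' V₂ ∈ 𝓝 (1 : G) :=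
    hca.preimage_mem_nhds (by simpa using hV₂)
  obtain ⟨A₁, hA₁F, hA₁⟩ := hFs _ hX
  obtain ⟨B₁, hB₁F, hB₁⟩ := hHs _ hY
  refine ⟨(fun p : G × G => p.1 * p.2) '' ((A₀ ∩ A₁) ×ˢ (B₀ ∩ B₁)),
    image_mem_map (prod_mem_prod (inter_mem hA₀F hA₁F) (inter_mem hB₀F hB₁F)), ?_⟩
  rintro x ⟨⟨a, b⟩, ⟨⟨haA0, haA1⟩, hbB0, hbB1⟩, rfl⟩
  rintro y ⟨⟨a', b'⟩, ⟨⟨ha'A0, ha'A1⟩, hb'B0, hb'B1⟩, rfl⟩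
  constructor
  · have hw : b₀⁻¹ * b ∈ V₂ := (hB₀ _ hb₀ _ hbB0).1
    have hx : b₀⁻¹ * (a⁻¹ * a') * b₀ ∈ V₂ := (hA₁ _ haA1 _ ha'A1).1
    have hb' : b⁻¹ * b' ∈ V₂ := (hB₀ _ hbB0 _ hb'B0).1
    have e1 : (a * b)⁻¹ * (a' * b') =
        (b₀⁻¹ * b)⁻¹ * (b₀⁻¹ * (a⁻¹ * a') * b₀) * (b₀⁻¹ * b) * (b⁻¹ * b') := by group
    rw [e1]
    exact h₁ _ (hV₂triple _ (hV₂inv _ hw) _ hx _ hw) _ (hV₂sub _ hb')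
  · have hu : a' * a₀⁻¹ ∈ V₂ := (hA₀ _ ha₀ _ ha'A0).2
    have hy : a₀ * (b' * b⁻¹) * a₀⁻¹ ∈ V₂ := (hB₁ _ hbB1 _ hb'B1).2
    have ha : a' * a⁻¹ ∈ V₂ := (hA₀ _ haA0 _ ha'A0).2
    have e2 : (a' * b') * (a * b)⁻¹ =
        (a' * a₀⁻¹) * (a₀ * (b' * b⁻¹) * a₀⁻¹) * (a' * a₀⁻¹)⁻¹ * (a' * a⁻¹) := by group
    rw [e2]
    exact h₁ _ (hV₂triple _ hu _ hy _ (hV₂inv _ hu)) _ (hV₂sub _ ha)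

/-- The canonical map `G × G → Ĝ × Ĝ`. -/
noncomputable def coe₂ : G × G → Completion G × Completion G :=
  Prod.map ((↑) : G → Completion G) ((↑) : G → Completion G)

lemma isDenseInducing_coe₂ : IsDenseInducing (coe₂ (G := G)) :=
  Completion.isDenseInducing_coe.prodMap Completion.isDenseInducing_coe

lemma cauchy_comap_nhds (a : Completion G) :
    Cauchy (comap ((↑) : G → Completion G) (𝓝 a)) := by
  haveI : NeBot (comap ((↑) : G → Completion G) (𝓝 a)) :=
    Completion.isDenseInducing_coe.comap_nhds_neBot a
  exact cauchy_nhds.comap (le_of_eq (Completion.comap_coe_eq_uniformity G))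

lemma mul_extend_exists (q : Completion G × Completion G) :
    ∃ c, Tendsto (fun p : G × G => ((p.1 * p.2 : G) : Completion G))
      (comap coe₂ (𝓝 q)) (𝓝 c) := by
  obtain ⟨q1, q2⟩ := q
  have hc : comap (coe₂ (G := G)) (𝓝 (q1, q2)) =
      (comap ((↑) : G → Completion G) (𝓝 q1)) ×ˢ
        (comap ((↑) : G → Completion G) (𝓝 q2)) := by
    rw [nhds_prod_eq]
    exact (prod_comap_comap_eq).symm
  have hcau : Cauchy (Filter.map (fun p : G × G => p.1 * p.2)
      ((comap ((↑) : G → Completion G) (𝓝 q1)) ×ˢ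
        (comap ((↑) : G → Completion G) (𝓝 q2)))) :=
    cauchy_mul (cauchy_comap_nhds q1) (cauchy_comap_nhds q2)
  have hcau2 := hcau.map (Completion.uniformContinuous_coe G)
  obtain ⟨c, hc'⟩ := CompleteSpace.complete hcau2
  refine ⟨c, ?_⟩
  rw [hc]
  rw [Filter.map_map] at hc'
  exact hc'

/-- Multiplication on the completion. -/
noncomputable def hatMul : Mul (Completion G) :=
  ⟨fun a b => (isDenseInducing_coe₂ (G := G)).extend
    (fun p : G × G => ((p.1 * p.2 : G) : Completion G)) (a, b)⟩

attribute [local instance] hatMul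

lemma continuous_hatMul :
    Continuous fun p : Completion G × Completion G => p.1 * p.2 :=
  (isDenseInducing_coe₂ (G := G)).continuous_extend mul_extend_exists

/-- `ContinuousMul` for the completion. -/
def hatContinuousMul : ContinuousMul (Completion G) := ⟨continuous_hatMul⟩

attribute [local instance] hatContinuousMul

lemma coe_mul' (a b : G) :
    ((a * b : G) : Completion G) = (a : Completion G) * (b : Completion G) :=
  ((isDenseInducing_coe₂ (G := G)).extend_eq
    ((Completion.continuous_coe G).comp (show Continuous (fun p : G × G => p.1 * p.2) from @continuous_mul G ‹TopologicalSpace G› _ _)) (a, b)).symm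

/-- One on the completion. -/
noncomputable def hatOne : One (Completion G) := ⟨((1 : G) : Completion G)⟩

/-- Inversion on the completion. -/
noncomputable def hatInv : Inv (Completion G) :=
  ⟨Completion.map fun x : G => x⁻¹⟩

attribute [local instance] hatOne hatInv

lemma coe_one' : ((1 : G) : Completion G) = 1 := rfl

lemma coe_inv' (a : G) : ((a⁻¹ : G) : Completion G) = (a : Completion G)⁻¹ :=
  (Completion.map_coe uniformContinuous_inv' a).symm

lemma continuous_hatInv : Continuous fun a : Completion G => a⁻¹ :=
  Completion.continuous_map

/-- `ContinuousInv` for the completion. -/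
def hatContinuousInv : ContinuousInv (Completion G) := ⟨continuous_hatInv⟩

attribute [local instance] hatContinuousInv

/-- The group structure on the Raikov completion. -/
noncomputable def hatGroup : Group (Completion G) := by
  refine Group.ofLeftAxioms ?_ ?_ ?_
  · intro x y z
    refine Completion.induction_on₃ x y z ?_ fun a b c => ?_
    · exact isClosed_eq
        ((continuous_fst.mul (continuous_fst.comp continuous_snd)).mul
          ((continuous_snd.comp continuous_snd)))
        (continuous_fst.mul ((continuous_fst.comp continuous_snd).mul
          (continuous_snd.comp continuous_snd)))
    · rw [← coe_mul', ← coe_mul', ← coe_mul', ← coe_mul', mul_assoc]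
  · intro x
    refine Completion.induction_on x ?_ fun a => ?_
    · exact isClosed_eq (continuous_const.mul continuous_id) continuous_id
    · rw [← coe_one', ← coe_mul', one_mul]
  · intro x
    refine Completion.induction_on x ?_ fun a => ?_
    · exact isClosed_eq (continuous_hatInv.mul continuous_id) continuous_const
    · rw [← coe_inv', ← coe_mul', inv_mul_cancel, coe_one']

attribute [local instance] hatGroup

/-- The completion is a topological group. -/
def hatTopGroup : IsTopologicalGroup (Completion G) where
  continuous_mul := continuous_hatMul
  continuous_inv := continuous_hatInv

attribute [local instance] hatTopGroup

/-- The canonical monoid homomorphism to the completion. -/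
noncomputable def coeHom : G →* Completion G where
  toFun := ((↑) : G → Completion G)
  map_one' := rfl
  map_mul' := coe_mul'

lemma totallyBounded_of_precompact {U : Set G}
    (h : ∀ V ∈ 𝓝 (1 : G), ∃ F : Set G, F.Finite ∧ U ⊆ F * V ∧ U ⊆ V * F) :
    TotallyBounded U := by
  classical
  rw [uniformity_hasBasis.totallyBounded_iff]
  intro V hV
  obtain ⟨W, hW, hWinv, hWtriple, hWsub⟩ := exists_triple_nhds_one V hV
  have h1W : (1 : G) ∈ W := mem_of_mem_nhds hW
  have hWpair : ∀ x ∈ W, ∀ y ∈ W, x * y ∈ V := by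
    intro x hx y hy
    have := hWtriple _ hx _ hy _ h1W
    simpa using this
  obtain ⟨F, hFfin, hF1, hF2⟩ := h W hW
  set pick : G × G → G := fun p =>
    Classical.epsilon fun z => z ∈ U ∧ (∃ w ∈ W, z = p.1 * w) ∧ ∃ w ∈ W, z = w * p.2
    with hpick
  refine ⟨pick '' (F ×ˢ F), (hFfin.prod hFfin).image _, ?_⟩
  intro u hu
  obtain ⟨f, hfF, w1, hw1, hfw⟩ := hF1 hu
  obtain ⟨w2, hw2, f', hf'F, hw2f⟩ := hF2 hu
  have hsat : ∃ z, z ∈ U ∧ (∃ w ∈ W, z = f * w) ∧ ∃ w ∈ W, z = w * f' :=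
    ⟨u, hu, ⟨w1, hw1, hfw.symm⟩, ⟨w2, hw2, hw2f.symm⟩⟩
  have hz := Classical.epsilon_spec hsat
  obtain ⟨hzU, ⟨w₃, hw₃, hz1⟩, w₄, hw₄, hz2⟩ := hz
  refine mem_iUnion₂.2 ⟨pick (f, f'), mem_image_of_mem _ (mk_mem_prod hfF hf'F), ?_⟩
  have hpf : pick (f, f') =
      Classical.epsilon fun z => z ∈ U ∧ (∃ w ∈ W, z = f * w) ∧ ∃ w ∈ W, z = w * f' := rfl
  constructor
  · show u⁻¹ * pick (f, f') ∈ V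
    have hfw' : f * w1 = u := hfw
    rw [hpf, hz1, ← hfw']
    have e : (f * w1)⁻¹ * (f * w₃) = w1⁻¹ * w₃ := by group
    rw [e]
    exact hWpair _ (hWinv _ hw1) _ hw₃
  · show pick (f, f') * u⁻¹ ∈ V
    have hw2f' : w2 * f' = u := hw2f
    rw [hpf, hz2, ← hw2f']
    have e : (w₄ * f') * (w2 * f')⁻¹ = w₄ * w2⁻¹ := by group
    rw [e]
    exact hWpair _ hw₄ _ (hWinv _ hw2)

/-- T2 separation for the completion. -/
lemma hatT2 : T2Space (Completion G) := inferInstance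

/-- Local compactness of the completion. -/
lemma hatLocallyCompact
    (hlp : ∃ U ∈ 𝓝 (1 : G), ∀ V ∈ 𝓝 (1 : G),
      ∃ F : Set G, F.Finite ∧ U ⊆ F * V ∧ U ⊆ V * F) :
    LocallyCompactSpace (Completion G) := by
  obtain ⟨U, hU, hprec⟩ := hlp
  have htb : TotallyBounded U := totallyBounded_of_precompact hprec
  have htb2 : TotallyBounded (((↑) : G → Completion G) '' U) :=
    htb.image (Completion.uniformContinuous_coe G)
  have hK : IsCompact (closure (((↑) : G → Completion G) '' U)) :=
    htb2.closure.isCompact_of_isClosed isClosed_closure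
  have hmem : closure (((↑) : G → Completion G) '' U) ∈ 𝓝 ((1 : G) : Completion G) :=
    Completion.isDenseInducing_coe.closure_image_mem_nhds hU
  exact hK.locallyCompactSpace_of_mem_nhds_of_group hmem

end

end WeilAux

theorem stmt_6 {G : Type u} [Group G] [TopologicalSpace G] [IsTopologicalGroup G]
    [T2Space G]
    (hlp : ∃ U ∈ nhds (1 : G), ∀ V ∈ nhds (1 : G),
      ∃ F : Set G, F.Finite ∧ U ⊆ F * V ∧ U ⊆ V * F) :
    ∃ (H : Type u) (_ : Group H) (_ : TopologicalSpace H)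
      (_ : IsTopologicalGroup H) (_ : T2Space H) (_ : LocallyCompactSpace H)
      (f : G →* H), Topology.IsInducing f ∧ Function.Injective f ∧ DenseRange f := by
  letI : UniformSpace G := WeilAux.biU G
  letI : Mul (UniformSpace.Completion G) := WeilAux.hatMul
  letI : One (UniformSpace.Completion G) := WeilAux.hatOne
  letI : Inv (UniformSpace.Completion G) := WeilAux.hatInv
  refine ⟨UniformSpace.Completion G, WeilAux.hatGroup, inferInstance,
    WeilAux.hatTopGroup, inferInstance, WeilAux.hatLocallyCompact hlp,
    WeilAux.coeHom, ?_, ?_, ?_⟩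
  · exact (UniformSpace.Completion.isDenseInducing_coe).toIsInducing
  · exact @UniformSpace.Completion.coe_injective G _ (inferInstance : @T0Space G ‹TopologicalSpace G›)
  · exact UniformSpace.Completion.denseRange_coe
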